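/- arXiv:1307.1277 — 8 statements merged into one kernel-verified Lean document; each statement's English description precedes it below -/
import Mathlib

section
/- Let E : W → Set (Set W) be an evidence function with derived plausibility relation ≼_E, and define B_E by w B_E v iff v ∈ ⋂𝒳 for some w-scenario 𝒳. If u B_E w and w ≼_E v, then u B_E v. -/
/-- Finite intersection property. -/
def FIP {W : Type*} (𝒳 : Set (Set W)) : Prop :=
  ∀ 𝒴 ⊆ 𝒳, 𝒴.Finite → (⋂₀ 𝒴).Nonempty

/-- A w-scenario: maximal fip subfamily of E(w). -/
def Scenario {W : Type*} (E : W → Set (Set W)) (w : W) (𝒳 : Set (Set W)) : Prop :=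
  𝒳 ⊆ E w ∧ FIP 𝒳 ∧ ∀ 𝒴, 𝒳 ⊆ 𝒴 → 𝒴 ⊆ E w → FIP 𝒴 → 𝒴 = 𝒳

/-- Specialization (derived plausibility) order. -/
def SpecLE {W : Type*} (E : W → Set (Set W)) (w v : W) : Prop :=
  ∀ u : W, ∀ X ∈ E u, w ∈ X → v ∈ X

/-- Derived belief relation. -/
def BE {W : Type*} (E : W → Set (Set W)) (w v : W) : Prop :=
  ∃ 𝒳, Scenario E w 𝒳 ∧ v ∈ ⋂₀ 𝒳

theorem stmt_1 {W : Type*} (E : W → Set (Set W)) (u w v : W)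
    (h1 : BE E u w) (h2 : SpecLE E w v) : BE E u v := by
  obtain ⟨𝒳, hS, hw⟩ := h1
  exact ⟨𝒳, hS, fun X hX => h2 u X (hS.1 hX) (hw X hX)⟩
end

section
/- Let W = ℕ with uniform evidence set ℰ = {[N, ∞) : N ∈ ℕ} ∪ {W}. Then the unique scenario on this model is all of ℰ, and its intersection is empty; hence there is no point v belonging to the intersection of any scenario (i.e., [B]⊥ holds, witnessing that [E]⊤ → ⟨B⟩⊤ fails). -/
def UScenario {W : Type*} (ℰ : Set (Set W)) (𝒳 : Set (Set W)) : Prop :=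
  𝒳 ⊆ ℰ ∧ FIP 𝒳 ∧ ∀ 𝒴, 𝒳 ⊆ 𝒴 → 𝒴 ⊆ ℰ → FIP 𝒴 → 𝒴 = 𝒳

lemma aux_key (𝒴 : Set (Set ℕ)) (hf : 𝒴.Finite)
    (h : 𝒴 ⊆ ({X | ∃ N : ℕ, X = Set.Ici N} ∪ {Set.univ} : Set (Set ℕ))) :
    ∃ M, Set.Ici M ⊆ ⋂₀ 𝒴 := by
  revert h
  refine Set.Finite.induction_on (motive := fun 𝒴 _ => 𝒴 ⊆ ({X | ∃ N : ℕ, X = Set.Ici N} ∪ {Set.univ} : Set (Set ℕ)) → ∃ M, Set.Ici M ⊆ ⋂₀ 𝒴) 𝒴 hf (fun _ => ⟨0, by simp⟩) ?_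
  intro a s _ _ ih h
  obtain ⟨M, hM⟩ := ih (fun x hx => h (Set.mem_insert_of_mem a hx))
  have haE := h (Set.mem_insert a s)
  rw [Set.sInter_insert]
  rcases haE with ⟨N, rfl⟩ | ha'
  · exact ⟨max N M, Set.subset_inter
      ((Set.Ici_subset_Ici.2 (le_max_left N M)))
      ((Set.Ici_subset_Ici.2 (le_max_right N M)).trans hM)⟩
  · simp only [Set.mem_singleton_iff] at ha'
    subst ha'
    exact ⟨M, Set.subset_inter (Set.subset_univ _) hM⟩

lemma aux_fip : FIP ({X | ∃ N : ℕ, X = Set.Ici N} ∪ {Set.univ} : Set (Set ℕ)) := by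
  intro 𝒴 h hf
  obtain ⟨M, hM⟩ := aux_key 𝒴 hf h
  exact ⟨M, hM (le_refl M)⟩

theorem stmt_4 :
    let ℰ : Set (Set ℕ) := {X | ∃ N : ℕ, X = Set.Ici N} ∪ {Set.univ}
    UScenario ℰ ℰ ∧ (∀ 𝒳, UScenario ℰ 𝒳 → 𝒳 = ℰ ∧ ⋂₀ 𝒳 = ∅) ∧
      ∀ v : ℕ, ¬ ∃ 𝒳, UScenario ℰ 𝒳 ∧ v ∈ ⋂₀ 𝒳 := by
  intro ℰ
  have hU : UScenario ℰ ℰ :=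
    ⟨le_refl _, aux_fip, fun 𝒴 h1 h2 _ => le_antisymm h2 h1⟩
  have hEmpty : ⋂₀ ℰ = ∅ := by
    ext n
    simp only [Set.mem_empty_iff_false, iff_false, Set.mem_sInter]
    intro h
    have := h (Set.Ici (n + 1)) (Or.inl ⟨n + 1, rfl⟩)
    simp at this
  have hAll : ∀ 𝒳, UScenario ℰ 𝒳 → 𝒳 = ℰ ∧ ⋂₀ 𝒳 = ∅ := by
    intro 𝒳 ⟨h1, _, h3⟩
    have : 𝒳 = ℰ := (h3 ℰ h1 (le_refl _) aux_fip).symm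
    exact ⟨this, by rw [this]; exact hEmpty⟩
  refine ⟨hU, hAll, fun v ⟨𝒳, h𝒳, hv⟩ => ?_⟩
  rw [(hAll 𝒳 h𝒳).2] at hv
  exact hv
end

section
/- Let ℳ = ⟨W, ℰ, V⟩ be a uniform evidence model with derived plausibility order ≼_ℰ. If w ∈ ⋂𝒳 for some scenario 𝒳, then 𝒳 = ℰ[w] (the family of all evidence sets containing w), w is ≼_ℰ-maximal, and ⋂𝒳 = {v : w ≼_ℰ v and v ≼_ℰ w}. -/
def USpecLE {W : Type*} (ℰ : Set (Set W)) (w v : W) : Prop :=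
  ∀ X ∈ ℰ, w ∈ X → v ∈ X

theorem stmt_5 {W : Type*} (ℰ : Set (Set W))
    (hne : ∅ ∉ ℰ) (huniv : Set.univ ∈ ℰ)
    (w : W) (𝒳 : Set (Set W)) (hsc : UScenario ℰ 𝒳) (hw : w ∈ ⋂₀ 𝒳) :
    𝒳 = {X ∈ ℰ | w ∈ X} ∧
    (∀ v, USpecLE ℰ w v → USpecLE ℰ v w) ∧
    ⋂₀ 𝒳 = {v | USpecLE ℰ w v ∧ USpecLE ℰ v w} := by
  obtain ⟨hsub, hfip, hmax⟩ := hsc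
  have h1 : 𝒳 = {X ∈ ℰ | w ∈ X} := by
    refine (hmax {X ∈ ℰ | w ∈ X} (fun X hX => ⟨hsub hX, hw X hX⟩) (fun X hX => hX.1) ?_).symm
    intro 𝒴 h𝒴 _
    exact ⟨w, fun X hX => (h𝒴 hX).2⟩
  have h2 : ∀ v, USpecLE ℰ w v → USpecLE ℰ v w := by
    intro v hwv X hX hvX
    have hmem : X ∈ 𝒳 := by
      have : 𝒳 ∪ {X} = 𝒳 := by
        refine hmax _ (Set.subset_union_left) ?_ ?_
        · rintro Y (hY | rfl)
          · exact hsub hY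
          · exact hX
        · intro 𝒴 h𝒴 _
          refine ⟨v, fun Y hY => ?_⟩
          rcases h𝒴 hY with hY' | rfl
          · exact hwv Y (hsub hY') (hw Y hY')
          · exact hvX
      have : X ∈ 𝒳 ∪ {X} := Or.inr rfl
      rwa [‹𝒳 ∪ {X} = 𝒳›] at this
    rw [h1] at hmem
    exact hmem.2
  refine ⟨h1, h2, ?_⟩
  ext v
  constructor
  · intro hv
    have hwv : USpecLE ℰ w v := by
      intro X hX hwX
      exact hv X (h1 ▸ (⟨hX, hwX⟩ : X ∈ {X ∈ ℰ | w ∈ X}))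
    exact ⟨hwv, h2 v hwv⟩
  · rintro ⟨hwv, _⟩ X hX
    rw [h1] at hX
    exact hwv X hX.1 hX.2
end

section
/- Let ℳ = ⟨W, ℰ, V⟩ be a flat uniform evidence model with derived plausibility order ≼_ℰ. If w is ≼_ℰ-maximal, then ℰ[w] is a scenario, and w lies in the intersection of some scenario (i.e., w ∈ B_ℰ). Hence in flat uniform models, B_ℰ is exactly the set of ≼_ℰ-maximal points. -/
lemma chain_cover {α : Type*} {c : Set (Set α)} (hne : c.Nonempty)
    (hch : IsChain (· ⊆ ·) c) {s : Set α} (hfin : s.Finite) :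
    s ⊆ ⋃₀ c → ∃ t ∈ c, s ⊆ t := by
  have key : ∀ (u : Finset α), (u : Set α) ⊆ ⋃₀ c → ∃ t ∈ c, (u : Set α) ⊆ t := by
    classical
    intro u
    induction u using Finset.induction_on with
    | empty => exact fun _ => ⟨hne.choose, hne.choose_spec, by simp⟩
    | insert _ _ ha ih =>
      rename_i a s
      intro hsub
      rw [Finset.coe_insert] at hsub ⊢
      obtain ⟨t, htc, hst⟩ := ih (fun x hx => hsub (Set.mem_insert_of_mem _ hx))
      obtain ⟨u, huc, hau⟩ := hsub (Set.mem_insert a _)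
      rcases hch.total htc huc with h | h
      · exact ⟨u, huc, Set.insert_subset hau (hst.trans h)⟩
      · exact ⟨t, htc, Set.insert_subset (h hau) hst⟩
  intro hsub
  obtain ⟨t, htc, hst⟩ := key hfin.toFinset (by rwa [Set.Finite.coe_toFinset])
  exact ⟨t, htc, by rwa [Set.Finite.coe_toFinset] at hst⟩

lemma exists_scenario {W : Type*} {ℰ 𝒳 : Set (Set W)} (h𝒳 : 𝒳 ⊆ ℰ)
    (hfip : FIP 𝒳) : ∃ 𝒮, UScenario ℰ 𝒮 ∧ 𝒳 ⊆ 𝒮 := by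
  obtain ⟨m, hxm, hm⟩ := zorn_subset_nonempty {𝒴 | 𝒴 ⊆ ℰ ∧ FIP 𝒴}
    (fun c hcS hch hcne => by
      refine ⟨⋃₀ c, ⟨fun X hX => ?_, fun 𝒴 h𝒴 hfin => ?_⟩, fun s hs => Set.subset_sUnion_of_mem hs⟩
      · obtain ⟨t, htc, hXt⟩ := hX
        exact (hcS htc).1 hXt
      · obtain ⟨t, htc, hsub⟩ := chain_cover hcne hch hfin h𝒴
        exact (hcS htc).2 𝒴 hsub hfin) 𝒳 ⟨h𝒳, hfip⟩
  exact ⟨m, ⟨hm.prop.1, hm.prop.2,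
    fun 𝒴 hm𝒴 h𝒴ℰ h𝒴fip => (hm.le_of_ge ⟨h𝒴ℰ, h𝒴fip⟩ hm𝒴).antisymm hm𝒴⟩, hxm⟩

theorem stmt_6 {W : Type*} (ℰ : Set (Set W))
    (hne : ∅ ∉ ℰ) (huniv : Set.univ ∈ ℰ)
    (hflat : ∀ 𝒳, UScenario ℰ 𝒳 → (⋂₀ 𝒳).Nonempty) :
    (∀ w, (∀ v, USpecLE ℰ w v → USpecLE ℰ v w) →
      UScenario ℰ {X ∈ ℰ | w ∈ X} ∧ ∃ 𝒳, UScenario ℰ 𝒳 ∧ w ∈ ⋂₀ 𝒳) ∧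
    {w | ∃ 𝒳, UScenario ℰ 𝒳 ∧ w ∈ ⋂₀ 𝒳} =
      {w | ∀ v, USpecLE ℰ w v → USpecLE ℰ v w} := by
  have hWne : Nonempty W := by
    rcases Set.eq_empty_or_nonempty (Set.univ : Set W) with h | h
    · exact absurd (h ▸ huniv) hne
    · exact ⟨h.choose⟩
  -- forward for each maximal w
  have hmax : ∀ w, (∀ v, USpecLE ℰ w v → USpecLE ℰ v w) →
      UScenario ℰ {X ∈ ℰ | w ∈ X} ∧ ∃ 𝒳, UScenario ℰ 𝒳 ∧ w ∈ ⋂₀ 𝒳 := by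
    intro w hw
    have hfip : FIP {X ∈ ℰ | w ∈ X} := by
      intro 𝒴 h𝒴 _
      exact ⟨w, fun X hX => (h𝒴 hX).2⟩
    obtain ⟨𝒮, h𝒮, hsub⟩ := exists_scenario (fun X hX => hX.1) hfip
    obtain ⟨v, hv⟩ := hflat 𝒮 h𝒮
    have hwv : USpecLE ℰ w v := fun X hX hwX => hv X (hsub ⟨hX, hwX⟩)
    have hvw := hw v hwv
    have h𝒮eq : 𝒮 = {X ∈ ℰ | w ∈ X} := by
      apply Set.Subset.antisymm _ hsub
      intro X hX
      exact ⟨h𝒮.1 hX, hvw X (h𝒮.1 hX) (hv X hX)⟩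
    refine ⟨h𝒮eq ▸ h𝒮, 𝒮, h𝒮, ?_⟩
    rw [h𝒮eq]
    exact fun X hX => hX.2
  refine ⟨hmax, Set.Subset.antisymm ?_ fun w hw => (hmax w hw).2⟩
  rintro w ⟨𝒳, h𝒳, hw⟩ v hwv X hXℰ hvX
  -- show X ∈ 𝒳
  have hfip : FIP (insert X 𝒳) := by
    intro 𝒴 h𝒴 _
    refine ⟨v, fun Y hY => ?_⟩
    rcases h𝒴 hY with h | h
    · exact h ▸ hvX
    · exact hwv Y (h𝒳.1 h) (hw Y h)
  have : insert X 𝒳 = 𝒳 :=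
    h𝒳.2.2 _ (Set.subset_insert _ _) (Set.insert_subset hXℰ h𝒳.1) hfip
  exact hw X (this ▸ Set.mem_insert X 𝒳)
end

section
/- If an evidence model is flat, then its derived plausibility relation satisfies the boundedness condition: every directed set has an upper bound. -/
/-- A finite subset of the union of a chain is contained in some member. -/
lemma chain_finite_subset {W : Type*} (c : Set (Set (Set W))) (hc : IsChain (· ⊆ ·) c)
    (hcne : c.Nonempty) (𝒴 : Set (Set W)) (hfin : 𝒴.Finite) (hsub : 𝒴 ⊆ ⋃₀ c) :
    ∃ t ∈ c, 𝒴 ⊆ t := by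
  revert hsub
  refine Set.Finite.induction_on (motive := fun 𝒴 _ => 𝒴 ⊆ ⋃₀ c → ∃ t ∈ c, 𝒴 ⊆ t) 𝒴 hfin
    (fun _ => ⟨hcne.choose, hcne.choose_spec, by simp⟩) ?_
  intro X 𝒴 _ _ ih hsub
  obtain ⟨t, htc, ht⟩ := ih (fun y hy => hsub (Set.mem_insert_of_mem _ hy))
  obtain ⟨s, hsc, hXs⟩ := hsub (Set.mem_insert _ _)
  rcases hc.total hsc htc with h | h
  · exact ⟨t, htc, Set.insert_subset (h hXs) ht⟩
  · exact ⟨s, hsc, Set.insert_subset hXs (ht.trans h)⟩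

theorem stmt_7 {W : Type*} [Nonempty W] (ℰ : Set (Set W))
    (hne : ∅ ∉ ℰ) (huniv : Set.univ ∈ ℰ)
    (hflat : ∀ 𝒳, UScenario ℰ 𝒳 → (⋂₀ 𝒳).Nonempty)
    (D : Set W)
    (hdir : ∀ a ∈ D, ∀ b ∈ D, ∃ c ∈ D, USpecLE ℰ a c ∧ USpecLE ℰ b c) :
    ∃ v : W, ∀ d ∈ D, USpecLE ℰ d v := by
  rcases D.eq_empty_or_nonempty with rfl | ⟨d₀, hd₀⟩
  · exact ⟨Classical.arbitrary W, by simp⟩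
  -- The family of evidence sets containing some element of D
  set F : Set (Set W) := {X | X ∈ ℰ ∧ ∃ d ∈ D, d ∈ X} with hF
  have hFE : F ⊆ ℰ := fun X hX => hX.1
  -- finite subfamilies of F have a common element of D
  have key : ∀ 𝒴 : Set (Set W), 𝒴.Finite → 𝒴 ⊆ F → ∃ c ∈ D, ∀ X ∈ 𝒴, c ∈ X := by
    intro 𝒴 hfin
    refine Set.Finite.induction_on
      (motive := fun 𝒴 _ => 𝒴 ⊆ F → ∃ c ∈ D, ∀ X ∈ 𝒴, c ∈ X) 𝒴 hfin
      (fun _ => ⟨d₀, hd₀, by simp⟩) ?_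
    intro X 𝒴 _ _ ih hsub
    obtain ⟨c, hcD, hc⟩ := ih (fun y hy => hsub (Set.mem_insert_of_mem _ hy))
    obtain ⟨hXE, d, hdD, hdX⟩ := hsub (Set.mem_insert _ _)
    obtain ⟨e, heD, hde, hce⟩ := hdir d hdD c hcD
    refine ⟨e, heD, fun Y hY => ?_⟩
    rcases Set.mem_insert_iff.mp hY with rfl | hY
    · exact hde Y hXE hdX
    · exact hce Y ((hsub (Set.mem_insert_of_mem _ hY)).1) (hc Y hY)
  have hFIP : FIP F := fun 𝒴 hsub hfin => by
    obtain ⟨c, _, hc⟩ := key 𝒴 hfin hsub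
    exact ⟨c, by simpa using hc⟩
  -- Zorn to extend F to a maximal FIP family inside ℰ
  set S : Set (Set (Set W)) := {𝒴 | 𝒴 ⊆ ℰ ∧ FIP 𝒴} with hS
  have hchainub : ∀ c ⊆ S, IsChain (· ⊆ ·) c → c.Nonempty →
      ∃ ub ∈ S, ∀ s ∈ c, s ⊆ ub := by
    intro c hcS hchain hcne
    refine ⟨⋃₀ c, ⟨fun X hX => ?_, fun 𝒴 hsub hfin => ?_⟩, fun s hs => Set.subset_sUnion_of_mem hs⟩
    · obtain ⟨t, htc, hXt⟩ := hX
      exact (hcS htc).1 hXt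
    · obtain ⟨t, htc, ht⟩ := chain_finite_subset c hchain hcne 𝒴 hfin hsub
      exact (hcS htc).2 𝒴 ht hfin
  obtain ⟨m, hFm, hmax⟩ := zorn_subset_nonempty S hchainub F ⟨hFE, hFIP⟩
  have hmS : m ∈ S := hmax.prop
  have hscen : UScenario ℰ m :=
    ⟨hmS.1, hmS.2, fun 𝒴 hm𝒴 h𝒴E h𝒴 => (hmax.eq_of_le ⟨h𝒴E, h𝒴⟩ hm𝒴).symm⟩
  obtain ⟨v, hv⟩ := hflat m hscen
  refine ⟨v, fun d hdD X hXE hdX => ?_⟩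
  exact hv _ (hFm ⟨hXE, d, hdD, hdX⟩)
end

section
/- In a flat uniform evidence model, for every world w there exists a ≼_ℰ-maximal v with w ≼_ℰ v, where ≼_ℰ is the derived plausibility order. -/
theorem stmt_8 {W : Type*} (ℰ : Set (Set W))
    (hne : ∅ ∉ ℰ) (huniv : Set.univ ∈ ℰ)
    (hflat : ∀ 𝒳, UScenario ℰ 𝒳 → (⋂₀ 𝒳).Nonempty)
    (w : W) :
    ∃ v, USpecLE ℰ w v ∧ ∀ u, USpecLE ℰ v u → USpecLE ℰ u v := by
  classical
  set 𝒳₀ : Set (Set W) := {X | X ∈ ℰ ∧ w ∈ X} with h𝒳₀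
  set S : Set (Set (Set W)) := {𝒴 | 𝒳₀ ⊆ 𝒴 ∧ 𝒴 ⊆ ℰ ∧ FIP 𝒴} with hS
  have h0 : 𝒳₀ ∈ S := by
    refine ⟨subset_rfl, fun X hX => hX.1, ?_⟩
    intro 𝒴 h𝒴 _
    exact ⟨w, fun X hX => (h𝒴 hX).2⟩
  have hchaincond : ∀ c ⊆ S, IsChain (· ⊆ ·) c → c.Nonempty →
      ∃ ub ∈ S, ∀ s ∈ c, s ⊆ ub := by
    intro c hcS hchain hcne
    refine ⟨⋃₀ c, ⟨?_, ?_, ?_⟩, fun s hs => Set.subset_sUnion_of_mem hs⟩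
    · obtain ⟨t, ht⟩ := hcne
      exact ((hcS ht).1).trans (Set.subset_sUnion_of_mem ht)
    · intro X hX
      obtain ⟨t, ht, hXt⟩ := hX
      exact (hcS ht).2.1 hXt
    · intro 𝒴 h𝒴 h𝒴fin
      have hsub0 : (h𝒴fin.toFinset : Set (Set W)) ⊆ ⋃ t ∈ c, t := by
        rw [h𝒴fin.coe_toFinset, Set.sUnion_eq_biUnion] at *
        exact h𝒴
      obtain ⟨t, htc, hsub⟩ :=
        DirectedOn.exists_mem_subset_of_finset_subset_biUnion hcne
          (hchain.directedOn) hsub0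
      rw [h𝒴fin.coe_toFinset] at hsub
      exact (hcS htc).2.2 𝒴 hsub h𝒴fin
  obtain ⟨𝒳, h𝒳₀sub, h𝒳max⟩ := zorn_subset_nonempty S hchaincond 𝒳₀ h0
  obtain ⟨h₁, h₂, h₃⟩ := h𝒳max.prop
  have hsc : UScenario ℰ 𝒳 := by
    refine ⟨h₂, h₃, fun 𝒴 hsub h𝒴E h𝒴fip => ?_⟩
    exact (h𝒳max.eq_of_subset ⟨h₁.trans hsub, h𝒴E, h𝒴fip⟩ hsub).symm
  obtain ⟨v, hv⟩ := hflat 𝒳 hsc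
  refine ⟨v, ?_, ?_⟩
  · intro X hX hwX
    exact hv _ (h₁ ⟨hX, hwX⟩)
  · intro u hvu X hX huX
    have hXmem : X ∈ 𝒳 := by
      have hfip : FIP (insert X 𝒳) := by
        intro 𝒴 h𝒴 _
        refine ⟨u, fun Y hY => ?_⟩
        rcases h𝒴 hY with rfl | hY𝒳
        · exact huX
        · exact hvu Y (h₂ hY𝒳) (hv _ hY𝒳)
      have heq := h𝒳max.eq_of_subset
        ⟨h₁.trans (Set.subset_insert _ _), Set.insert_subset hX h₂, hfip⟩
        (Set.subset_insert _ _)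
      exact heq ▸ Set.mem_insert _ _
    exact hv _ hXmem
end

section
/- Over uniform evidence models with derived plausibility relation and derived belief: if every world w has some v ⪰ w such that all u ⪰ v satisfy φ (i.e., [A]⟨≼⟩[≼]φ holds), then φ holds at every point in the intersection of every scenario (i.e., [B]φ holds). If moreover the model is flat, the converse also holds, so [B]φ ↔ [A]⟨≼⟩[≼]φ. -/
theorem stmt_9 {W : Type*} (ℰ : Set (Set W))
    (hne : ∅ ∉ ℰ) (huniv : Set.univ ∈ ℰ) (φ : Set W) :
    ((∀ w : W, ∃ v, USpecLE ℰ w v ∧ ∀ u, USpecLE ℰ v u → u ∈ φ) →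
        (∀ 𝒳, UScenario ℰ 𝒳 → ∀ v ∈ ⋂₀ 𝒳, v ∈ φ)) ∧
    ((∀ 𝒳, UScenario ℰ 𝒳 → (⋂₀ 𝒳).Nonempty) →
        ((∀ 𝒳, UScenario ℰ 𝒳 → ∀ v ∈ ⋂₀ 𝒳, v ∈ φ) ↔
          (∀ w : W, ∃ v, USpecLE ℰ w v ∧ ∀ u, USpecLE ℰ v u → u ∈ φ))) := by
  have hWne : Nonempty W := by
    rcases Set.eq_empty_or_nonempty (Set.univ : Set W) with h | h
    · exact absurd (h ▸ huniv) hne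
    · exact ⟨h.choose⟩
  -- forward direction (part 1)
  have fwd : (∀ w : W, ∃ v, USpecLE ℰ w v ∧ ∀ u, USpecLE ℰ v u → u ∈ φ) →
      (∀ 𝒳, UScenario ℰ 𝒳 → ∀ v ∈ ⋂₀ 𝒳, v ∈ φ) := by
    intro h 𝒳 ⟨hsub, hfip, hmax⟩ v hv
    obtain ⟨v', hvv', hv'⟩ := h v
    -- v' is in every member of 𝒳
    have hv'X : ∀ X ∈ 𝒳, v' ∈ X := fun X hX =>
      hvv' X (hsub hX) (hv X hX)
    -- every X ∈ ℰ containing v' is in 𝒳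
    apply hv' v
    intro X hXE hv'X'
    have : 𝒳 ∪ {X} = 𝒳 := by
      apply hmax
      · exact Set.subset_union_left
      · intro Y hY
        rcases hY with hY | hY
        · exact hsub hY
        · rw [Set.mem_singleton_iff] at hY; subst hY; exact hXE
      · intro 𝒴 h𝒴 _
        refine ⟨v', ?_⟩
        intro Y hY
        rcases h𝒴 hY with hY' | hY'
        · exact hv'X Y hY'
        · rw [Set.mem_singleton_iff] at hY'; subst hY'; exact hv'X'
    have hX𝒳 : X ∈ 𝒳 := by
      rw [← this]; exact Or.inr rfl
    exact hv X hX𝒳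
  refine ⟨fwd, fun hflat => ⟨?_, fwd⟩⟩
  intro hB w
  -- extend ℰ_w = {X ∈ ℰ | w ∈ X} to a scenario via Zorn
  set S : Set (Set (Set W)) := {𝒳 | 𝒳 ⊆ ℰ ∧ FIP 𝒳} with hS
  have hEwS : {X ∈ ℰ | w ∈ X} ∈ S := by
    refine ⟨fun X hX => hX.1, ?_⟩
    intro 𝒴 h𝒴 _
    exact ⟨w, fun Y hY => (h𝒴 hY).2⟩
  have hub : ∀ c ⊆ S, IsChain (· ⊆ ·) c → c.Nonempty →
      ∃ ub ∈ S, ∀ s ∈ c, s ⊆ ub := by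
    intro c hcS hchain hcne
    refine ⟨⋃₀ c, ⟨?_, ?_⟩, fun s hs => Set.subset_sUnion_of_mem hs⟩
    · intro X hX
      obtain ⟨t, htc, hXt⟩ := hX
      exact (hcS htc).1 hXt
    · have key : ∀ 𝒵 : Set (Set W), 𝒵.Finite → 𝒵 ⊆ ⋃₀ c → ∃ t ∈ c, 𝒵 ⊆ t := by
        intro 𝒵 hf
        refine Set.Finite.induction_on (motive := fun 𝒵 _ => 𝒵 ⊆ ⋃₀ c → ∃ t ∈ c, 𝒵 ⊆ t)
          𝒵 hf (fun _ => ⟨hcne.choose, hcne.choose_spec, Set.empty_subset _⟩) ?_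
        · intro X 𝒵' _ _ ih h𝒵
          obtain ⟨t, htc, ht⟩ := ih (fun x hx => h𝒵 (Set.mem_insert_of_mem _ hx))
          obtain ⟨s, hsc, hXs⟩ := h𝒵 (Set.mem_insert _ _)
          rcases hchain.total htc hsc with hts | hst
          · exact ⟨s, hsc, Set.insert_subset hXs (ht.trans hts)⟩
          · exact ⟨t, htc, Set.insert_subset (hst hXs) ht⟩
      intro 𝒴 h𝒴 h𝒴f
      obtain ⟨t, htc, ht⟩ := key 𝒴 h𝒴f h𝒴
      exact (hcS htc).2 𝒴 ht h𝒴f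
  obtain ⟨m, hEwm, hmS, hmmax⟩ := zorn_subset_nonempty S hub _ hEwS
  · have hscen : UScenario ℰ m := by
      refine ⟨hmS.1, hmS.2, fun 𝒴 h1 h2 h3 => le_antisymm (hmmax ⟨h2, h3⟩ h1) h1⟩
    obtain ⟨v, hv⟩ := hflat m hscen
    refine ⟨v, ?_, ?_⟩
    · intro X hXE hwX
      exact hv X (hEwm ⟨hXE, hwX⟩)
    · intro u hvu
      apply hB m hscen
      intro X hX
      exact hvu X (hscen.1 hX) (hv X hX)
end

section
/- Counterexample to conditional-belief disjunction: there is a uniform evidence model with four evidence sets and valuations of p, q such that [B]q holds (q is true at every point of the intersection of every scenario) but neither [B]^p q nor [B]^{¬p} q holds. Concretely, take W with points a,b,c,d,e,f, X₁={a,b}, Y₁={b,c}, X₂={d,e}, Y₂={e,f}, ℰ={X₁,Y₁,X₂,Y₂,W}, with p true exactly at {b,c,d}, q true exactly at {b,e}. Then every scenario intersection is contained in ⟦q⟧, but there is a p-scenario 𝒳 with ⋂𝒳^p ⊄ ⟦q⟧ and a ¬p-scenario 𝒴 with ⋂𝒴^{¬p} ⊄ ⟦q⟧. -/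
def relFam {W : Type*} (𝒳 : Set (Set W)) (X : Set W) : Set (Set W) :=
  (fun Y => Y ∩ X) '' 𝒳

def RelScenario {W : Type*} (ℰ : Set (Set W)) (X : Set W) (𝒳 : Set (Set W)) : Prop :=
  𝒳 ⊆ ℰ ∧ FIP (relFam 𝒳 X) ∧ ∀ 𝒴, 𝒳 ⊆ 𝒴 → 𝒴 ⊆ ℰ → FIP (relFam 𝒴 X) → 𝒴 = 𝒳

lemma fip_common {W : Type*} {𝒳 : Set (Set W)} (w : W) (h : ∀ S ∈ 𝒳, w ∈ S) : FIP 𝒳 :=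
  fun 𝒴 h𝒴 _ => ⟨w, fun S hS => h S (h𝒴 hS)⟩

lemma not_fip_pair {W : Type*} {𝒳 : Set (Set W)} {A B : Set W}
    (hA : A ∈ 𝒳) (hB : B ∈ 𝒳) (h : A ∩ B = ∅) : ¬ FIP 𝒳 := by
  intro hf
  have := hf {A, B} (by
    intro S hS
    rcases hS with rfl | rfl
    · exact hA
    · exact hB) ((Set.finite_singleton B).insert A)
  rw [Set.sInter_pair, h] at this
  exact Set.not_nonempty_empty this

lemma mem_relFam {W : Type*} {𝒳 : Set (Set W)} {A : Set W} (X : Set W) (hA : A ∈ 𝒳) :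
    A ∩ X ∈ relFam 𝒳 X := Set.mem_image_of_mem _ hA

namespace S14

def X₁ : Set (Fin 6) := {0, 1}
def Y₁ : Set (Fin 6) := {1, 2}
def X₂ : Set (Fin 6) := {3, 4}
def Y₂ : Set (Fin 6) := {4, 5}
def ℰ : Set (Set (Fin 6)) := {X₁, Y₁, X₂, Y₂, Set.univ}
def p : Set (Fin 6) := {1, 2, 3}
def q : Set (Fin 6) := {1, 4}

lemma d12 : X₁ ∩ X₂ = ∅ := by ext x; fin_cases x <;> simp [X₁, X₂]
lemma dY12 : Y₁ ∩ X₂ = ∅ := by ext x; fin_cases x <;> simp [Y₁, X₂]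
lemma d1Y2 : X₁ ∩ Y₂ = ∅ := by ext x; fin_cases x <;> simp [X₁, Y₂]
lemma dY1Y2 : Y₁ ∩ Y₂ = ∅ := by ext x; fin_cases x <;> simp [Y₁, Y₂]

lemma part1 : ∀ 𝒳, UScenario ℰ 𝒳 → ⋂₀ 𝒳 ⊆ q := by
  intro 𝒳 ⟨hsub, hfip, hmax⟩ w hw
  by_cases h1 : X₁ ∈ 𝒳 ∨ Y₁ ∈ 𝒳
  · have hss : 𝒳 ⊆ {X₁, Y₁, Set.univ} := by
      intro S hS
      rcases hsub hS with rfl | rfl | rfl | rfl | rfl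
      · exact Or.inl rfl
      · exact Or.inr (Or.inl rfl)
      · exfalso
        rcases h1 with h | h
        · exact not_fip_pair h hS d12 hfip
        · exact not_fip_pair h hS dY12 hfip
      · exfalso
        rcases h1 with h | h
        · exact not_fip_pair h hS d1Y2 hfip
        · exact not_fip_pair h hS dY1Y2 hfip
      · exact Or.inr (Or.inr rfl)
    have heq : ({X₁, Y₁, Set.univ} : Set (Set (Fin 6))) = 𝒳 := by
      apply hmax _ hss
      · intro S hS
        rcases hS with rfl | rfl | rfl
        · exact Or.inl rfl
        · exact Or.inr (Or.inl rfl)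
        · exact Or.inr (Or.inr (Or.inr (Or.inr rfl)))
      · exact fip_common 1 (by
          intro S hS
          rcases hS with rfl | rfl | rfl <;> simp [X₁, Y₁])
    rw [← heq] at hw
    have ha : w ∈ X₁ := hw X₁ (Or.inl rfl)
    have hb : w ∈ Y₁ := hw Y₁ (Or.inr (Or.inl rfl))
    fin_cases w <;> simp_all [X₁, Y₁, q]
  · push_neg at h1
    have hss : 𝒳 ⊆ {X₂, Y₂, Set.univ} := by
      intro S hS
      rcases hsub hS with rfl | rfl | rfl | rfl | rfl
      · exact absurd hS h1.1
      · exact absurd hS h1.2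
      · exact Or.inl rfl
      · exact Or.inr (Or.inl rfl)
      · exact Or.inr (Or.inr rfl)
    have heq : ({X₂, Y₂, Set.univ} : Set (Set (Fin 6))) = 𝒳 := by
      apply hmax _ hss
      · intro S hS
        rcases hS with rfl | rfl | rfl
        · exact Or.inr (Or.inr (Or.inl rfl))
        · exact Or.inr (Or.inr (Or.inr (Or.inl rfl)))
        · exact Or.inr (Or.inr (Or.inr (Or.inr rfl)))
      · exact fip_common 4 (by
          intro S hS
          rcases hS with rfl | rfl | rfl <;> simp [X₂, Y₂])
    rw [← heq] at hw
    have ha : w ∈ X₂ := hw X₂ (Or.inl rfl)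
    have hb : w ∈ Y₂ := hw Y₂ (Or.inr (Or.inl rfl))
    fin_cases w <;> simp_all [X₂, Y₂, q]

lemma part2 : ∃ 𝒳, RelScenario ℰ p 𝒳 ∧ ¬ (⋂₀ relFam 𝒳 p ⊆ q) := by
  refine ⟨{X₂, Set.univ}, ⟨?_, ?_, ?_⟩, ?_⟩
  · intro S hS
    rcases hS with rfl | rfl
    · exact Or.inr (Or.inr (Or.inl rfl))
    · exact Or.inr (Or.inr (Or.inr (Or.inr rfl)))
  · refine fip_common 3 ?_
    rintro S ⟨Y, hY, rfl⟩
    rcases hY with rfl | rfl <;> simp [X₂, p]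
  · intro 𝒴 hsub hE hf
    refine Set.Subset.antisymm ?_ hsub
    intro S hS
    have hX2 : X₂ ∩ p ∈ relFam 𝒴 p := mem_relFam p (hsub (Or.inl rfl))
    rcases hE hS with rfl | rfl | rfl | rfl | rfl
    · exact absurd hf (not_fip_pair (mem_relFam p hS) hX2
        (by ext x; fin_cases x <;> simp [X₁, X₂, p]))
    · exact absurd hf (not_fip_pair (mem_relFam p hS) hX2
        (by ext x; fin_cases x <;> simp [Y₁, X₂, p]))
    · exact Or.inl rfl
    · exact absurd hf (not_fip_pair (mem_relFam p hS) (mem_relFam p hS)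
        (by ext x; fin_cases x <;> simp [Y₂, p]))
    · exact Or.inr rfl
  · intro h
    have h3 : (3 : Fin 6) ∈ ⋂₀ relFam {X₂, Set.univ} p := by
      rintro S ⟨Y, hY, rfl⟩
      rcases hY with rfl | rfl <;> simp [X₂, p]
    have := h h3
    simp [q] at this

lemma part3 : ∃ 𝒴, RelScenario ℰ pᶜ 𝒴 ∧ ¬ (⋂₀ relFam 𝒴 pᶜ ⊆ q) := by
  refine ⟨{X₁, Set.univ}, ⟨?_, ?_, ?_⟩, ?_⟩
  · intro S hS
    rcases hS with rfl | rfl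
    · exact Or.inl rfl
    · exact Or.inr (Or.inr (Or.inr (Or.inr rfl)))
  · refine fip_common 0 ?_
    rintro S ⟨Y, hY, rfl⟩
    rcases hY with rfl | rfl <;> simp [X₁, p]
  · intro 𝒴 hsub hE hf
    refine Set.Subset.antisymm ?_ hsub
    intro S hS
    have hX1 : X₁ ∩ pᶜ ∈ relFam 𝒴 pᶜ := mem_relFam pᶜ (hsub (Or.inl rfl))
    rcases hE hS with rfl | rfl | rfl | rfl | rfl
    · exact Or.inl rfl
    · exact absurd hf (not_fip_pair (mem_relFam pᶜ hS) (mem_relFam pᶜ hS)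
        (by ext x; fin_cases x <;> simp [Y₁, p]))
    · exact absurd hf (not_fip_pair (mem_relFam pᶜ hS) hX1
        (by ext x; fin_cases x <;> simp [X₁, X₂, p]))
    · exact absurd hf (not_fip_pair (mem_relFam pᶜ hS) hX1
        (by ext x; fin_cases x <;> simp [X₁, Y₂, p]))
    · exact Or.inr rfl
  · intro h
    have h0 : (0 : Fin 6) ∈ ⋂₀ relFam {X₁, Set.univ} pᶜ := by
      rintro S ⟨Y, hY, rfl⟩
      rcases hY with rfl | rfl <;> simp [X₁, p]
    have := h h0
    simp [q] at this

end S14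

theorem stmt_14 :
    let X₁ : Set (Fin 6) := {0, 1}
    let Y₁ : Set (Fin 6) := {1, 2}
    let X₂ : Set (Fin 6) := {3, 4}
    let Y₂ : Set (Fin 6) := {4, 5}
    let ℰ : Set (Set (Fin 6)) := {X₁, Y₁, X₂, Y₂, Set.univ}
    let p : Set (Fin 6) := {1, 2, 3}
    let q : Set (Fin 6) := {1, 4}
    (∀ 𝒳, UScenario ℰ 𝒳 → ⋂₀ 𝒳 ⊆ q) ∧
    (∃ 𝒳, RelScenario ℰ p 𝒳 ∧ ¬ (⋂₀ relFam 𝒳 p ⊆ q)) ∧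
    (∃ 𝒴, RelScenario ℰ pᶜ 𝒴 ∧ ¬ (⋂₀ relFam 𝒴 pᶜ ⊆ q)) := by
  exact ⟨S14.part1, S14.part2, S14.part3⟩
end
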